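/- Let A and B be two disjoint cliques forming a homogeneous pair in a graph G, and let P be an induced path in G neither of whose two endpoints belongs to A. Then P contains at most one vertex of A. -/

import Mathlib

/-- `l` is the list of consecutive vertices of an induced path of `G`:
its vertices are distinct and two of them are adjacent in `G` exactly when
they are consecutive in `l`. -/
def IsInducedPathList {V : Type*} (G : SimpleGraph V) (l : List V) : Prop :=
  l.Nodup ∧ ∀ i j : Fin l.length,
    G.Adj (l.get i) (l.get j) ↔ (i.1 + 1 = j.1 ∨ j.1 + 1 = i.1)

/-- Two disjoint cliques `A` and `B` form a homogeneous pair if at least one of them has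
at least two vertices and every vertex outside `A ∪ B` is adjacent either to all
vertices of `A` or to none of them, and likewise for `B`. -/
def IsHomogeneousPair {V : Type*} (G : SimpleGraph V) (A B : Set V) : Prop :=
  G.IsClique A ∧ G.IsClique B ∧ Disjoint A B ∧ (A.Nontrivial ∨ B.Nontrivial) ∧
    ∀ v, v ∉ A → v ∉ B →
      ((∀ a ∈ A, G.Adj v a) ∨ (∀ a ∈ A, ¬ G.Adj v a)) ∧
      ((∀ b ∈ B, G.Adj v b) ∨ (∀ b ∈ B, ¬ G.Adj v b))

lemma stmt9_aux {V : Type*} (G : SimpleGraph V) (A B : Set V)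
    (hAB : IsHomogeneousPair G A B)
    (l : List V) (hl : IsInducedPathList G l) (hne : l ≠ [])
    (hh : l.head hne ∉ A) (hla : l.getLast hne ∉ A)
    (i : ℕ) (h2 : i + 1 < l.length)
    (hx : l.get ⟨i, by omega⟩ ∈ A) (hy : l.get ⟨i + 1, h2⟩ ∈ A) : False := by
  obtain ⟨hAcl, hBcl, hdisj, -, hhom⟩ := hAB
  have hinj : Function.Injective l.get := List.nodup_iff_injective_get.mp hl.1
  have hgne : ∀ (a b : ℕ) (ha : a < l.length) (hb : b < l.length), a ≠ b →
      l.get ⟨a, ha⟩ ≠ l.get ⟨b, hb⟩ := by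
    intro a b ha hb hab h
    exact hab (by simpa [Fin.ext_iff] using hinj h)
  have hgeq : ∀ (a b : ℕ) (ha : a < l.length) (hb : b < l.length), a = b →
      l.get ⟨a, ha⟩ = l.get ⟨b, hb⟩ := by
    intro a b ha hb hab
    subst hab; rfl
  -- i ≥ 1
  have hi1 : 1 ≤ i := by
    by_contra h
    apply hh
    rw [← List.get_mk_zero (by omega : 0 < l.length)]
    rw [hgeq 0 i (by omega) (by omega) (by omega)]
    exact hx
  -- i + 2 < length
  have hi2 : i + 2 < l.length := by
    by_contra h
    apply hla
    rw [show l.getLast hne = l.get ⟨l.length - 1, by omega⟩ from by simp [List.getLast_eq_getElem]]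
    rw [hgeq (l.length - 1) (i + 1) (by omega) h2 (by omega)]
    exact hy
  set x := l.get ⟨i, by omega⟩ with hxdef
  set y := l.get ⟨i + 1, h2⟩ with hydef
  set p := l.get ⟨i - 1, by omega⟩ with hpdef
  set q := l.get ⟨i + 2, hi2⟩ with hqdef
  have hpx : G.Adj p x := (hl.2 _ _).mpr (Or.inl (by show i - 1 + 1 = i; omega))
  have hpy : ¬ G.Adj p y := by
    intro h
    rcases (hl.2 _ _).mp h with h' | h' <;> simp only [] at h' <;> omega
  have hqy : G.Adj q y := (hl.2 _ _).mpr (Or.inr (by show (i + 1) + 1 = i + 2; omega))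
  have hqx : ¬ G.Adj q x := by
    intro h
    rcases (hl.2 _ _).mp h with h' | h' <;> simp only [] at h' <;> omega
  have hpq : ¬ G.Adj p q := by
    intro h
    rcases (hl.2 _ _).mp h with h' | h' <;> simp only [] at h' <;> omega
  have hpA : p ∉ A := fun hpA => hpy (hAcl hpA hy (hgne _ _ _ _ (by omega)))
  have hqA : q ∉ A := fun hqA => hqx (hAcl hqA hx (hgne _ _ _ _ (by omega)))
  have hpB : p ∈ B := by
    by_contra hpB
    rcases (hhom p hpA hpB).1 with h | h
    · exact hpy (h y hy)
    · exact h x hx hpx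
  have hqB : q ∈ B := by
    by_contra hqB
    rcases (hhom q hqA hqB).1 with h | h
    · exact hqx (h x hx)
    · exact h y hy hqy
  exact hpq (hBcl hpB hqB (hgne _ _ _ _ (by omega)))

/-- If `(A, B)` is a homogeneous pair of cliques of `G` and `P` is an induced path of `G`
neither of whose endpoints belongs to `A`, then `P` contains at most one vertex of `A`. -/
theorem stmt9 {V : Type*} (G : SimpleGraph V) (A B : Set V)
    (hAB : IsHomogeneousPair G A B)
    (l : List V) (hl : IsInducedPathList G l) (hne : l ≠ [])
    (hh : l.head hne ∉ A) (hla : l.getLast hne ∉ A) :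
    ∀ x ∈ l, ∀ y ∈ l, x ∈ A → y ∈ A → x = y := by
  intro x hx y hy hxA hyA
  by_contra hxy
  obtain ⟨i, hi⟩ := List.mem_iff_get.mp hx
  obtain ⟨j, hj⟩ := List.mem_iff_get.mp hy
  have hadj : G.Adj (l.get i) (l.get j) := by
    rw [hi, hj]; exact hAB.1 hxA hyA hxy
  rcases (hl.2 i j).mp hadj with h | h
  · refine stmt9_aux G A B hAB l hl hne hh hla i.1 (by omega) (by rw [show l.get ⟨i.1, by omega⟩ = l.get i from rfl, hi]; exact hxA) ?_
    have : (⟨i.1 + 1, by omega⟩ : Fin l.length) = j := by simp [Fin.ext_iff, h]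
    rw [this, hj]; exact hyA
  · refine stmt9_aux G A B hAB l hl hne hh hla j.1 (by omega) (by rw [show l.get ⟨j.1, by omega⟩ = l.get j from rfl, hj]; exact hyA) ?_
    have : (⟨j.1 + 1, by omega⟩ : Fin l.length) = i := by simp [Fin.ext_iff, h]
    rw [this, hi]; exact hxA
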